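/- If the Star STS instance is a YES instance, then the constructed parallel token swapping instance has a K-round solution, where K = 8n. -/

import Mathlib

namespace ParallelTS

/-!
Construction (parallel): given a Star STS instance with slots `1,…,m` (encoded as
`Fin m`), items `0,…,m` (encoded as `Option (Fin m)`, `none` = item 0), target
permutation `π` and swap sequence `s₁,…,sₙ` (`s : Fin n → Fin m`), set `K = 8n` and
build a subdivided star with root `r` and branches: swap branches `w¹,…,wⁿ`, slot
branches `s¹,…,s^{m+n}` and garbage branches `g`, `g′`, each a path of `K` vertices.
-/

/-- The branches: swap branches `wᵗ` (`Sum.inl`), slot branches `sⁱ`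
(`Sum.inr (Sum.inl _)`), and the garbage branches `g = Sum.inr (Sum.inr false)` and
`g′ = Sum.inr (Sum.inr true)`. -/
abbrev Branch (m n : ℕ) := Fin n ⊕ Fin (m + n) ⊕ Bool

/-- Vertices of the subdivided star: `none` is the root `r`; `some (b, j)` is the
vertex `b_{j+1}` of branch `b` at distance `j+1` from the root.  (The coordinate `j`
ranges over all of `ℕ`; the graph below only has edges between the root and the first
`K` vertices of each branch, so the remaining vertices are isolated and carry no
tokens.) -/
abbrev PV (m n : ℕ) := Option (Branch m n × ℕ)

/-- Adjacency generator for the subdivided star with branches of length `K = 8n`. -/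
def prel {m n : ℕ} : PV m n → PV m n → Prop
  | none, some (_, j) => j = 0 ∧ 0 < 8 * n
  | some (b, j), some (b', j') => b = b' ∧ j' = j + 1 ∧ j' < 8 * n
  | _, _ => False

/-- The subdivided star, as a simple graph. -/
def PGraph (m n : ℕ) : SimpleGraph (PV m n) := SimpleGraph.fromRel prel

/-- Swap the two values `e.1`, `e.2`. -/
def swapV {V : Type*} [DecidableEq V] (e : V × V) (v : V) : V :=
  if v = e.1 then e.2 else if v = e.2 then e.1 else v

/-- Trajectory of the vertex `v` under a schedule of rounds, each round being a list
of (disjoint) swaps. -/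
def applySched {V : Type*} [DecidableEq V] (sched : List (List (V × V))) (v : V) : V :=
  sched.foldl (fun v R => R.foldl (fun v e => swapV e v) v) v

/-- Two swaps do not share a vertex. -/
def NoShare {V : Type*} (e f : V × V) : Prop :=
  e.1 ≠ f.1 ∧ e.1 ≠ f.2 ∧ e.2 ≠ f.1 ∧ e.2 ≠ f.2

/-- Apply a sequence of star swaps (each given by a leaf) to a placement on the star
with center `none` and leaves `some l`. -/
def starApply {L : Type*} [DecidableEq L] (σ : List L) (f : Option L → Option L) :
    Option L → Option L :=
  σ.foldl (fun g l => fun t => swapV ((none : Option L), some l) (g t)) f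

/-- The Star STS instance is a YES instance. -/
def StarSTSYes {L : Type*} [DecidableEq L] (π : Equiv.Perm (Option L)) (σ : List L) : Prop :=
  ∃ σ' : List L, σ'.Sublist σ ∧ starApply σ' id = ⇑π

variable {m n : ℕ}

/-- `a(i,t)`: the index of the slot branch representing slot `i` after `t` steps:
`a(i,0) = i`, and `a(i,t) = a(i,t-1)` for `i ≠ s_t` while `a(s_t,t) = m + t`
(`1`-indexed; below everything is `0`-indexed). -/
def aFun (s : Fin n → Fin m) : ℕ → Fin m → Fin (m + n)
  | 0, i => ⟨i.val, Nat.lt_of_lt_of_le i.isLt (Nat.le_add_right m n)⟩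
  | t + 1, i =>
      if h : t < n then
        (if s ⟨t, h⟩ = i then ⟨m + t, Nat.add_lt_add_left h m⟩ else aFun s t i)
      else aFun s t i

/-- The enforcement tokens are indexed by `(t, r) : Fin n × Fin 4`; the token
`e_{(t,r)}` is `e_d` for the odd number `d = 8t + 2r + 1`. -/
def dOf (t : Fin n) (r : Fin 4) : ℕ := 8 * t.val + 2 * r.val + 1

/-- The starting branch `x^d` of enforcement token `e_d`, `d = 8t+2r+1`:
`x^{8T-7} = x^{8T-5} = w^T`, `x^{8T-3} = g′`, `x^{8T-1} = s^{m+T}` (where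
`T = t+1`). -/
def xB (s : Fin n → Fin m) (t : Fin n) (r : Fin 4) : Branch m n :=
  if r.val ≤ 1 then Sum.inl t
  else if r.val = 2 then Sum.inr (Sum.inr true)
  else Sum.inr (Sum.inl ⟨m + t.val, Nat.add_lt_add_left t.isLt m⟩)

/-- The destination branch `y^d` of enforcement token `e_d`, `d = 8t+2r+1`:
`y^{8T-7} = s^{a(s_T, T-1)}`, `y^{8T-5} = g`, `y^{8T-3} = y^{8T-1} = w^T` (where
`T = t+1`). -/
def yB (s : Fin n → Fin m) (t : Fin n) (r : Fin 4) : Branch m n :=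
  if r.val = 0 then Sum.inr (Sum.inl (aFun s t.val (s t)))
  else if r.val = 1 then Sum.inr (Sum.inr false)
  else Sum.inl t

/-- Initial vertex of item token `o`: the root for item `0`, the vertex `sⁱ₁` for
item `i`. -/
def itemInit (s : Fin n → Fin m) : Option (Fin m) → PV m n
  | none => none
  | some i => some (Sum.inr (Sum.inl (aFun s 0 i)), 0)

/-- Initial vertex of the enforcement token `e_d`, namely `x^d_d`. -/
def enfInit (s : Fin n → Fin m) (t : Fin n) (r : Fin 4) : PV m n :=
  some (xB s t r, dOf t r - 1)

/-- A vertex initially occupied by an item or enforcement token. -/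
def Occupied (s : Fin n → Fin m) (v : PV m n) : Prop :=
  (∃ o : Option (Fin m), itemInit s o = v) ∨
    (∃ tr : Fin n × Fin 4, enfInit s tr.1 tr.2 = v)

/-- The tokens of the parallel instance: item tokens, enforcement tokens, and one
filler token for each initially unoccupied vertex. -/
abbrev PTok (s : Fin n → Fin m) :=
  Option (Fin m) ⊕ (Fin n × Fin 4) ⊕ {v : PV m n // ¬ Occupied s v}

/-- Initial placement of all tokens. -/
def initP (s : Fin n → Fin m) : PTok s → PV m n
  | Sum.inl o => itemInit s o
  | Sum.inr (Sum.inl (t, r)) => enfInit s t r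
  | Sum.inr (Sum.inr v) => v.val

/-- Position of the enforcement token with branches `xb`, `yb` and starting distance
`d` after `τ` rounds of the scaffold solution: it moves one step toward its target in
every round, reaching the root after round `d`. -/
def posE (xb yb : Branch m n) (d τ : ℕ) : PV m n :=
  if τ < d then some (xb, d - τ - 1)
  else if τ = d then none
  else some (yb, τ - d - 1)

/-- The scaffold solution: the `K = 8n`-round schedule whose round `τ+1` swaps each
enforcement token one step along the path toward its target. -/
def scaffold (s : Fin n → Fin m) : List (List (PV m n × PV m n)) :=
  List.ofFn fun τ : Fin (8 * n) =>
    (List.ofFn fun t : Fin n =>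
      List.ofFn fun r : Fin 4 =>
        (posE (xB s t r) (yB s t r) (dOf t r) τ.val,
          posE (xB s t r) (yB s t r) (dOf t r) (τ.val + 1))).flatten

/-- Target placement of all tokens: item token `o` goes to the root if `π o = 0` and
to `s^{a(π o, n)}₁` otherwise; enforcement token `e_d` goes to `y^d_{K-d}`; each
filler token goes to the final vertex of its initial vertex under the scaffold
solution. -/
def tgtP (s : Fin n → Fin m) (π : Equiv.Perm (Option (Fin m))) : PTok s → PV m n
  | Sum.inl o =>
      (match π o with
        | none => none
        | some i => some (Sum.inr (Sum.inl (aFun s n i)), 0))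
  | Sum.inr (Sum.inl (t, r)) => some (yB s t r, 8 * n - dOf t r - 1)
  | Sum.inr (Sum.inr v) => applySched (scaffold s) v.val

/-- `sched` is a solution of the parallel token swapping instance using at most `K`
rounds: at most `K` rounds, every round is a matching of edges of the graph, and the
schedule brings every token from its initial vertex to its target vertex. -/
def IsSolution (s : Fin n → Fin m) (π : Equiv.Perm (Option (Fin m)))
    (K : ℕ) (sched : List (List (PV m n × PV m n))) : Prop :=
  sched.length ≤ K ∧
  (∀ R ∈ sched, (∀ e ∈ R, (PGraph m n).Adj e.1 e.2) ∧ R.Pairwise NoShare) ∧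
  ∀ t : PTok s, applySched sched (initP s t) = tgtP s π t

end ParallelTS

namespace ParallelTS

section Aux1
variable {V : Type*} [DecidableEq V]

lemma swapV_left (e : V × V) : swapV e e.1 = e.2 := by simp [swapV]

lemma swapV_right (e : V × V) : swapV e e.2 = e.1 := by
  rcases e with ⟨a, b⟩
  by_cases h : b = a <;> simp [swapV, h]

lemma swapV_of_ne {e : V × V} {v : V} (h1 : v ≠ e.1) (h2 : v ≠ e.2) : swapV e v = v := by
  simp [swapV, h1, h2]

lemma swapV_invol (e : V × V) : Function.Involutive (swapV e) := by
  intro v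
  unfold swapV
  split_ifs with h1 h2 <;> simp_all [swapV] <;> split_ifs <;> simp_all

lemma foldl_swap_eq_self (L : List (V × V)) (v : V)
    (h : ∀ e ∈ L, v ≠ e.1 ∧ v ≠ e.2) :
    L.foldl (fun v e => swapV e v) v = v := by
  induction L with
  | nil => rfl
  | cons f L ih =>
    have hf := h f (by simp)
    simp only [List.foldl_cons, swapV_of_ne hf.1 hf.2]
    exact ih fun e he => h e (by simp [he])

lemma foldl_swap_eq (L : List (V × V)) (hL : L.Pairwise NoShare) (e : V × V)
    (he : e ∈ L) (v : V) (hv : v = e.1 ∨ v = e.2) :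
    L.foldl (fun v e => swapV e v) v = swapV e v := by
  induction L with
  | nil => simp at he
  | cons f L ih =>
    rcases List.mem_cons.1 he with rfl | he'
    · simp only [List.foldl_cons]
      apply foldl_swap_eq_self
      intro g hg
      have hns : NoShare e g := (List.pairwise_cons.1 hL).1 g hg
      have : swapV e v = e.2 ∨ swapV e v = e.1 := by
        rcases hv with rfl | rfl
        · left; exact swapV_left e
        · right; exact swapV_right e
      rcases this with h | h <;> rw [h]
      · exact ⟨hns.2.2.1, hns.2.2.2⟩
      · exact ⟨hns.1, hns.2.1⟩
    · have hns : NoShare f e := (List.pairwise_cons.1 hL).1 e he'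
      have hv1 : v ≠ f.1 ∧ v ≠ f.2 := by
        rcases hv with rfl | rfl
        · exact ⟨fun h => hns.1 h.symm, fun h => hns.2.2.1 h.symm⟩
        · exact ⟨fun h => hns.2.1 h.symm, fun h => hns.2.2.2 h.symm⟩
      simp only [List.foldl_cons, swapV_of_ne hv1.1 hv1.2]
      exact ih (List.pairwise_cons.1 hL).2 he'

lemma roundApply_injective (L : List (V × V)) :
    Function.Injective (fun v => L.foldl (fun v e => swapV e v) v) := by
  induction L with
  | nil => exact fun a b h => h
  | cons f L ih =>
    simp only [List.foldl_cons]
    exact fun a b h => (swapV_invol f).injective (ih h)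

lemma applySched_injective (sched : List (List (V × V))) :
    Function.Injective (applySched sched) := by
  induction sched with
  | nil => exact fun a b h => h
  | cons R S ih =>
    have hrw : applySched (R :: S) = fun v => applySched S (R.foldl (fun v e => swapV e v) v) := rfl
    rw [hrw]
    exact fun a b h => roundApply_injective R (ih h)

end Aux1

section Aux2
variable {m n : ℕ}

lemma aFun_lt (s : Fin n → Fin m) : ∀ (t : ℕ) (i : Fin m), (aFun s t i).val < m + t := by
  intro t
  induction t with
  | zero => intro i; exact i.isLt
  | succ t ih =>
    intro i
    unfold aFun
    split_ifs with h1 h2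
    · simp
    · exact lt_trans (ih i) (by omega)
    · exact lt_trans (ih i) (by omega)

lemma aFun_inj (s : Fin n → Fin m) : ∀ (t : ℕ), Function.Injective (aFun s t) := by
  intro t
  induction t with
  | zero => intro i j h; exact Fin.ext (by simpa [aFun] using congrArg Fin.val h)
  | succ t ih =>
    intro i j h
    unfold aFun at h
    split_ifs at h with h1 h2 h3
    · rw [← h2, h3]
    · exfalso
      have hlt := aFun_lt s t j
      have hv := congrArg Fin.val h
      simp at hv
      omega
    · exfalso
      have hlt := aFun_lt s t i
      have hv := congrArg Fin.val h
      simp at hv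
      omega
    · exact ih h
    · exact ih h

/-- Star placement after `t` steps using mask `b`. -/
def fStar (s : Fin n → Fin m) (b : Fin n → Bool) : ℕ → Option (Fin m) → Option (Fin m)
  | 0, o => o
  | t + 1, o =>
      if h : t < n then
        (if b ⟨t, h⟩ then
          swapV ((none : Option (Fin m)), some (s ⟨t, h⟩)) (fStar s b t o)
        else fStar s b t o)
      else fStar s b t o

lemma fStar_succ (s : Fin n → Fin m) (b : Fin n → Bool) (t : ℕ) (ht : t < n) (o : Option (Fin m)) :
    fStar s b (t+1) o = if b ⟨t, ht⟩ then
      swapV ((none : Option (Fin m)), some (s ⟨t, ht⟩)) (fStar s b t o)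
    else fStar s b t o := by
  simp only [fStar]
  rw [dif_pos ht]

lemma fStar_false (s : Fin n → Fin m) (t : ℕ) (o : Option (Fin m)) :
    fStar s (fun _ => false) t o = o := by
  induction t with
  | zero => rfl
  | succ t ih => unfold fStar; split_ifs <;> simp_all

lemma starApply_comp' {L : Type*} [DecidableEq L] (σ : List L) :
    ∀ f : Option L → Option L, starApply σ f = fun o => starApply σ id (f o) := by
  induction σ with
  | nil => intro f; rfl
  | cons x σ ih =>
    intro f
    calc starApply (x :: σ) f = starApply σ (fun t => swapV (none, some x) (f t)) := rfl
      _ = fun o => starApply σ id (swapV (none, some x) (f o)) := ih _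
      _ = fun o => starApply (x :: σ) id (f o) := by
          funext o
          rw [show starApply (x :: σ) id (f o)
              = starApply σ (fun t => swapV (none, some x) (id t)) (f o) from rfl,
            ih (fun t => swapV (none, some x) (id t))]
          rfl

lemma starApply_comp {L : Type*} [DecidableEq L] (σ : List L) (f : Option L → Option L)
    (o : Option L) : starApply σ f o = starApply σ id (f o) := by
  rw [starApply_comp' σ f]

lemma fStar_shift (s : Fin (n+1) → Fin m) (b : Fin (n+1) → Bool) :
    ∀ t ≤ n, ∀ o, fStar s b (t+1) o
      = fStar (fun i => s i.succ) (fun i => b i.succ) t (fStar s b 1 o) := by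
  intro t
  induction t with
  | zero => intro _ o; rfl
  | succ t ih =>
    intro ht o
    have ht' : t ≤ n := by omega
    have h1 : t + 1 < n + 1 := by omega
    have h2 : t < n := by omega
    rw [fStar_succ s b (t+1) h1]
    rw [fStar_succ (fun i => s i.succ) (fun i => b i.succ) t h2]
    rw [ih ht' o]
    rfl

lemma exists_mask : ∀ {n : ℕ} (s : Fin n → Fin m) (σ' : List (Fin m)),
    σ'.Sublist (List.ofFn s) → ∃ b : Fin n → Bool,
      ∀ o, starApply σ' id o = fStar s b n o := by
  intro n
  induction n with
  | zero =>
    intro s σ' hσ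
    simp only [List.ofFn_zero, List.sublist_nil] at hσ
    subst hσ
    exact ⟨fun _ => false, fun o => rfl⟩
  | succ n ih =>
    intro s σ' hσ
    rw [List.ofFn_succ] at hσ
    rcases List.sublist_cons_iff.1 hσ with h | ⟨r, rfl, hr⟩
    · obtain ⟨b', hb'⟩ := ih (fun i => s i.succ) σ' h
      refine ⟨Fin.cons false b', fun o => ?_⟩
      have h1 := fStar_shift s (Fin.cons false b') n (le_refl n) o
      have h2 : fStar s (Fin.cons false b') 1 o = o := by
        show (if h : 0 < n + 1 then _ else _) = o
        rw [dif_pos (Nat.succ_pos n)]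
        show (if (Fin.cons false b' : Fin (n+1) → Bool) ⟨0, _⟩ then _ else fStar s _ 0 o) = o
        simp [show (⟨0, Nat.succ_pos n⟩ : Fin (n+1)) = 0 from rfl]
        rfl
      have h3 : (fun i : Fin n => (Fin.cons false b' : Fin (n+1) → Bool) i.succ) = b' := by
        funext i; simp
      rw [h1, h2, h3]
      exact hb' o
    · obtain ⟨b', hb'⟩ := ih (fun i => s i.succ) r hr
      refine ⟨Fin.cons true b', fun o => ?_⟩
      have h1 := fStar_shift s (Fin.cons true b') n (le_refl n) o
      have h2 : fStar s (Fin.cons true b') 1 o = swapV (none, some (s 0)) o := by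
        show (if h : 0 < n + 1 then _ else _) = _
        rw [dif_pos (Nat.succ_pos n)]
        show (if (Fin.cons true b' : Fin (n+1) → Bool) ⟨0, _⟩ then
            swapV (none, some (s ⟨0, _⟩)) (fStar s _ 0 o) else _) = _
        simp [show (⟨0, Nat.succ_pos n⟩ : Fin (n+1)) = 0 from rfl]
        rfl
      have h3 : (fun i : Fin n => (Fin.cons true b' : Fin (n+1) → Bool) i.succ) = b' := by
        funext i; simp
      have h4 : starApply (s 0 :: r) id o = starApply r id (swapV (none, some (s 0)) o) := by
        show starApply r _ o = _
        rw [starApply_comp]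
        rfl
      rw [h4, h1, h2, h3]
      exact hb' _

end Aux2

section Sched
variable {m n : ℕ} (s : Fin n → Fin m)

/-- The scaffold swap of enforcement token `(t,r)` in round `ρ`. -/
def swE (t : Fin n) (r : Fin 4) (ρ : ℕ) : PV m n × PV m n :=
  (posE (xB s t r) (yB s t r) (dOf t r) ρ, posE (xB s t r) (yB s t r) (dOf t r) (ρ+1))

def sRound (ρ : ℕ) : List (PV m n × PV m n) :=
  (List.ofFn fun t : Fin n => List.ofFn fun r : Fin 4 => swE s t r ρ).flatten

lemma scaffold_eq : scaffold s = List.ofFn fun τ : Fin (8*n) => sRound s τ.val := rfl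

def extraP (t : Fin n) : PV m n × PV m n := (some (Sum.inl t, 0), some (Sum.inl t, 1))

def extraSw (b : Fin n → Bool) (ρ : ℕ) : List (PV m n × PV m n) :=
  (List.ofFn fun t : Fin n => if ρ = 8*t.val+3 ∧ b t = true then [extraP t] else []).flatten

def modRound (b : Fin n → Bool) (ρ : ℕ) : List (PV m n × PV m n) :=
  sRound s ρ ++ extraSw b ρ

def modSched (b : Fin n → Bool) : List (List (PV m n × PV m n)) :=
  List.ofFn fun τ : Fin (8*n) => modRound s b τ.val

lemma mem_sRound {e : PV m n × PV m n} {ρ : ℕ} :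
    e ∈ sRound s ρ ↔ ∃ t r, e = swE s t r ρ := by
  simp only [sRound, List.mem_flatten, List.mem_ofFn, Set.mem_range]
  constructor
  · rintro ⟨l, ⟨t, rfl⟩, hl⟩
    rw [List.mem_ofFn] at hl
    obtain ⟨r, rfl⟩ := hl
    exact ⟨t, r, rfl⟩
  · rintro ⟨t, r, rfl⟩
    exact ⟨_, ⟨t, rfl⟩, by rw [List.mem_ofFn]; exact ⟨r, rfl⟩⟩

lemma mem_extraSw {b : Fin n → Bool} {e : PV m n × PV m n} {ρ : ℕ} :
    e ∈ extraSw b ρ ↔ ∃ t : Fin n, ρ = 8*t.val+3 ∧ b t = true ∧ e = extraP t := by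
  simp only [extraSw, List.mem_flatten, List.mem_ofFn, Set.mem_range]
  constructor
  · rintro ⟨l, ⟨t, rfl⟩, hl⟩
    split_ifs at hl with h
    · simp at hl
      exact ⟨t, h.1, h.2, hl⟩
    · simp at hl
  · rintro ⟨t, h1, h2, rfl⟩
    exact ⟨_, ⟨t, rfl⟩, by rw [if_pos ⟨h1, h2⟩]; simp⟩

lemma mem_modRound {b : Fin n → Bool} {e : PV m n × PV m n} {ρ : ℕ} :
    e ∈ modRound s b ρ ↔ ((∃ t r, e = swE s t r ρ) ∨
      ∃ t : Fin n, ρ = 8*t.val+3 ∧ b t = true ∧ e = extraP t) := by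
  rw [modRound, List.mem_append, mem_sRound, mem_extraSw]

lemma dOf_lt {t : Fin n} {r : Fin 4} : dOf t r < 8*n := by
  have h1 := t.isLt
  have h2 := r.isLt
  simp only [dOf]
  omega

lemma dOf_def {t : Fin n} {r : Fin 4} : dOf t r = 8*t.val+2*r.val+1 := rfl

lemma posE_lt {xb yb : Branch m n} {d τ : ℕ} (h : τ < d) :
    posE xb yb d τ = some (xb, d-τ-1) := if_pos h

lemma posE_eqd {xb yb : Branch m n} {d : ℕ} : posE xb yb d d = none := by
  unfold posE
  rw [if_neg (lt_irrefl d), if_pos rfl]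

lemma posE_gt {xb yb : Branch m n} {d τ : ℕ} (h : d < τ) :
    posE xb yb d τ = some (yb, τ-d-1) := by
  unfold posE
  rw [if_neg (by omega), if_neg (by omega)]

/-- Case analysis for positions in a swap branch. -/
lemma touch_w {t' : Fin n} {r' : Fin 4} {σ : ℕ} {tf : Fin n} {j : ℕ}
    (h : posE (xB s t' r') (yB s t' r') (dOf t' r') σ = some (Sum.inl tf, j)) :
    t' = tf ∧ ((σ < dOf t' r' ∧ r'.val ≤ 1 ∧ dOf t' r' = j + σ + 1)
      ∨ (dOf t' r' < σ ∧ 2 ≤ r'.val ∧ σ = dOf t' r' + j + 1)) := by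
  unfold posE at h
  by_cases h1 : σ < dOf t' r'
  · rw [if_pos h1, Option.some.injEq, Prod.mk.injEq] at h
    obtain ⟨hb, hj⟩ := h
    unfold xB at hb
    by_cases a1 : r'.val ≤ 1
    · rw [if_pos a1] at hb
      exact ⟨Sum.inl.inj hb, Or.inl ⟨h1, a1, by omega⟩⟩
    · rw [if_neg a1] at hb
      by_cases a2 : r'.val = 2
      · rw [if_pos a2] at hb; exact absurd hb (by simp)
      · rw [if_neg a2] at hb; exact absurd hb (by simp)
  · rw [if_neg h1] at h
    by_cases h2 : σ = dOf t' r'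
    · rw [if_pos h2] at h; exact absurd h (by simp)
    · rw [if_neg h2, Option.some.injEq, Prod.mk.injEq] at h
      obtain ⟨hb, hj⟩ := h
      unfold yB at hb
      by_cases a1 : r'.val = 0
      · rw [if_pos a1] at hb; exact absurd hb (by simp)
      · rw [if_neg a1] at hb
        by_cases a2 : r'.val = 1
        · rw [if_pos a2] at hb; exact absurd hb (by simp)
        · rw [if_neg a2] at hb
          have hr := r'.isLt
          exact ⟨Sum.inl.inj hb, Or.inr ⟨by omega, by omega, by omega⟩⟩

/-- Case analysis for positions at distance 1 from the root in a slot branch. -/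
lemma touch_slot {t' : Fin n} {r' : Fin 4} {σ : ℕ} {q : Fin (m+n)}
    (h : posE (xB s t' r') (yB s t' r') (dOf t' r') σ = some (Sum.inr (Sum.inl q), 0)) :
    ((q : ℕ) = m + t'.val ∧ σ = 8*t'.val + 6) ∨
      (q = aFun s t'.val (s t') ∧ σ = 8*t'.val + 2) := by
  have hd := @dOf_def n t' r'
  have hr := r'.isLt
  unfold posE at h
  by_cases h1 : σ < dOf t' r'
  · rw [if_pos h1, Option.some.injEq, Prod.mk.injEq] at h
    obtain ⟨hb, hj⟩ := h
    unfold xB at hb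
    by_cases a1 : r'.val ≤ 1
    · rw [if_pos a1] at hb; exact absurd hb (by simp)
    · rw [if_neg a1] at hb
      by_cases a2 : r'.val = 2
      · rw [if_pos a2] at hb; exact absurd hb (by simp)
      · rw [if_neg a2] at hb
        have hq : (q : ℕ) = m + t'.val := by
          have := Sum.inl.inj (Sum.inr.inj hb)
          exact (congrArg Fin.val this).symm
        exact Or.inl ⟨hq, by omega⟩
  · rw [if_neg h1] at h
    by_cases h2 : σ = dOf t' r'
    · rw [if_pos h2] at h; exact absurd h (by simp)
    · rw [if_neg h2, Option.some.injEq, Prod.mk.injEq] at h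
      obtain ⟨hb, hj⟩ := h
      unfold yB at hb
      by_cases a1 : r'.val = 0
      · rw [if_pos a1] at hb
        exact Or.inr ⟨(Sum.inl.inj (Sum.inr.inj hb)).symm, by omega⟩
      · rw [if_neg a1] at hb
        by_cases a2 : r'.val = 1
        · rw [if_pos a2] at hb; exact absurd hb (by simp)
        · rw [if_neg a2] at hb; exact absurd hb (by simp)

lemma touch_root {t' : Fin n} {r' : Fin 4} {σ : ℕ}
    (h : posE (xB s t' r') (yB s t' r') (dOf t' r') σ = none) : σ = dOf t' r' := by
  unfold posE at h
  by_cases h1 : σ < dOf t' r'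
  · rw [if_pos h1] at h; exact absurd h (by simp)
  · rw [if_neg h1] at h
    by_cases h2 : σ = dOf t' r'
    · exact h2
    · rw [if_neg h2] at h; exact absurd h (by simp)

end Sched

section Valid
variable {m n : ℕ} (s : Fin n → Fin m)

lemma xB_ne_yB {t t' : Fin n} {r r' : Fin 4} {σ σ' : ℕ} (hσ : σ < dOf t r)
    (hσ' : dOf t' r' < σ') (hle : σ' ≤ σ + 1) : xB s t r ≠ yB s t' r' := by
  have hd := @dOf_def n t r
  have hd' := @dOf_def n t' r'
  have hr := r.isLt
  have hr' := r'.isLt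
  intro h
  unfold xB yB at h
  by_cases a1 : r.val ≤ 1
  · rw [if_pos a1] at h
    by_cases c1 : r'.val = 0
    · rw [if_pos c1] at h; exact absurd h (by simp)
    · rw [if_neg c1] at h
      by_cases c2 : r'.val = 1
      · rw [if_pos c2] at h; exact absurd h (by simp)
      · rw [if_neg c2] at h
        have : t = t' := Sum.inl.inj h
        have hv : t.val = t'.val := congrArg Fin.val this
        omega
  · rw [if_neg a1] at h
    by_cases a2 : r.val = 2
    · rw [if_pos a2] at h
      by_cases c1 : r'.val = 0
      · rw [if_pos c1] at h; exact absurd h (by simp)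
      · rw [if_neg c1] at h
        by_cases c2 : r'.val = 1
        · rw [if_pos c2] at h; simp at h
        · rw [if_neg c2] at h; exact absurd h (by simp)
    · rw [if_neg a2] at h
      by_cases c1 : r'.val = 0
      · rw [if_pos c1] at h
        have hq := Sum.inl.inj (Sum.inr.inj h)
        have hv : m + t.val = (aFun s t'.val (s t')).val := (congrArg Fin.val hq)
        have hlt := aFun_lt s t'.val (s t')
        omega
      · rw [if_neg c1] at h
        by_cases c2 : r'.val = 1
        · rw [if_pos c2] at h; exact absurd h (by simp)
        · rw [if_neg c2] at h; exact absurd h (by simp)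

lemma dOf_inj {t t' : Fin n} {r r' : Fin 4} (h : dOf t r = dOf t' r') : (t, r) = (t', r') := by
  have hd := @dOf_def n t r
  have hd' := @dOf_def n t' r'
  have hr := r.isLt
  have hr' := r'.isLt
  have h1 : t.val = t'.val := by omega
  have h2 : r.val = r'.val := by omega
  rw [Prod.mk.injEq]
  exact ⟨Fin.ext h1, Fin.ext h2⟩

lemma posE_ne {t t' : Fin n} {r r' : Fin 4} (hne : (t, r) ≠ (t', r')) {σ σ' : ℕ}
    (h1 : σ ≤ σ' + 1) (h2 : σ' ≤ σ + 1) :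
    posE (xB s t r) (yB s t r) (dOf t r) σ ≠ posE (xB s t' r') (yB s t' r') (dOf t' r') σ' := by
  have hdd : dOf t r ≠ dOf t' r' := fun h => hne (dOf_inj h)
  have hd := @dOf_def n t r
  have hd' := @dOf_def n t' r'
  intro h
  unfold posE at h
  by_cases a1 : σ < dOf t r
  · rw [if_pos a1] at h
    by_cases c1 : σ' < dOf t' r'
    · rw [if_pos c1, Option.some.injEq, Prod.mk.injEq] at h
      omega
    · rw [if_neg c1] at h
      by_cases c2 : σ' = dOf t' r'
      · rw [if_pos c2] at h; exact absurd h (by simp)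
      · rw [if_neg c2, Option.some.injEq, Prod.mk.injEq] at h
        exact xB_ne_yB s (σ := σ) (σ' := σ') a1 (by omega) (by omega) h.1
  · rw [if_neg a1] at h
    by_cases a2 : σ = dOf t r
    · rw [if_pos a2] at h
      by_cases c1 : σ' < dOf t' r'
      · rw [if_pos c1] at h; exact absurd h (by simp)
      · rw [if_neg c1] at h
        by_cases c2 : σ' = dOf t' r'
        · omega
        · rw [if_neg c2] at h; exact absurd h (by simp)
    · rw [if_neg a2] at h
      by_cases c1 : σ' < dOf t' r'
      · rw [if_pos c1, Option.some.injEq, Prod.mk.injEq] at h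
        exact xB_ne_yB s (σ := σ') (σ' := σ) c1 (by omega) (by omega) h.1.symm
      · rw [if_neg c1] at h
        by_cases c2 : σ' = dOf t' r'
        · rw [if_pos c2] at h; exact absurd h (by simp)
        · rw [if_neg c2, Option.some.injEq, Prod.mk.injEq] at h
          omega

lemma NoShare_swE {t t' : Fin n} {r r' : Fin 4} (h : (t, r) ≠ (t', r')) (ρ : ℕ) :
    NoShare (swE s t r ρ) (swE s t' r' ρ) :=
  ⟨posE_ne s h (by omega) (by omega), posE_ne s h (by omega) (by omega),
    posE_ne s h (by omega) (by omega), posE_ne s h (by omega) (by omega)⟩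

lemma posE_ne_w01 {t' : Fin n} {r' : Fin 4} {tv j σ : ℕ} {tf : Fin n} (htf : tf.val = tv)
    (hσ : σ = 8*tv+3 ∨ σ = 8*tv+4) (hj : j ≤ 1) :
    posE (xB s t' r') (yB s t' r') (dOf t' r') σ ≠ some (Sum.inl tf, j) := by
  intro h
  obtain ⟨hteq, hcase⟩ := touch_w s h
  have hv : t'.val = tv := by rw [hteq, htf]
  have hd := @dOf_def n t' r'
  have hr := r'.isLt
  rcases hcase with ⟨u1, u2, u3⟩ | ⟨u1, u2, u3⟩ <;> omega

lemma NoShare_swE_extra {t t' : Fin n} {r' : Fin 4} (ρ : ℕ) (hρ : ρ = 8*t.val+3) :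
    NoShare (swE s t' r' ρ) (extraP t) := by
  refine ⟨?_, ?_, ?_, ?_⟩ <;>
    exact posE_ne_w01 s rfl (by omega) (by omega)

lemma round_pairwise (b : Fin n → Bool) (ρ : ℕ) : (modRound s b ρ).Pairwise NoShare := by
  rw [modRound, List.pairwise_append]
  refine ⟨?_, ?_, ?_⟩
  · rw [sRound, List.pairwise_flatten]
    constructor
    · intro l hl
      rw [List.mem_ofFn] at hl
      obtain ⟨t, rfl⟩ := hl
      rw [List.pairwise_ofFn]
      intro i j hij
      exact NoShare_swE s (by simp [Prod.ext_iff]; omega) ρ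
    · rw [List.pairwise_ofFn]
      intro i j hij x hx y hy
      rw [List.mem_ofFn] at hx hy
      obtain ⟨ri, rfl⟩ := hx
      obtain ⟨rj, rfl⟩ := hy
      refine NoShare_swE s ?_ ρ
      simp only [ne_eq, Prod.mk.injEq, not_and]
      intro hij'
      exact absurd hij' (Fin.ne_of_lt hij)
  · rw [extraSw, List.pairwise_flatten]
    constructor
    · intro l hl
      rw [List.mem_ofFn] at hl
      obtain ⟨t, rfl⟩ := hl
      show List.Pairwise NoShare (if ρ = 8*t.val+3 ∧ b t = true then [extraP t] else [])
      split_ifs <;> simp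
    · rw [List.pairwise_ofFn]
      intro i j hij x hx y hy
      have hx' : x ∈ (if ρ = 8*i.val+3 ∧ b i = true then [extraP i] else []) := hx
      have hy' : y ∈ (if ρ = 8*j.val+3 ∧ b j = true then [extraP j] else []) := hy
      clear hx hy
      split_ifs at hx' hy' with hi hj'
      · exfalso
        have hi1 := hi.1
        have hj1 := hj'.1
        have hv : i.val = j.val := by omega
        exact absurd (Fin.ext hv) (Fin.ne_of_lt hij)
      all_goals simp_all
  · intro x hx y hy
    rw [mem_sRound] at hx
    rw [mem_extraSw] at hy
    obtain ⟨t', r', rfl⟩ := hx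
    obtain ⟨t, h1, h2, rfl⟩ := hy
    exact NoShare_swE_extra s ρ h1

lemma adj_of_prel {x y : PV m n} (hne : x ≠ y) (h : prel x y ∨ prel y x) :
    (PGraph m n).Adj x y := by
  rw [PGraph, SimpleGraph.fromRel_adj]
  exact ⟨hne, h⟩

lemma round_adj (b : Fin n → Bool) (ρ : ℕ) (hρ : ρ < 8*n) :
    ∀ e ∈ modRound s b ρ, (PGraph m n).Adj e.1 e.2 := by
  intro e he
  rw [mem_modRound] at he
  rcases he with ⟨t, r, rfl⟩ | ⟨t, h1, h2, rfl⟩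
  · have hdlt : dOf t r < 8*n := dOf_lt
    rw [swE]
    by_cases c1 : ρ + 1 < dOf t r
    · rw [posE_lt (by omega), posE_lt c1]
      apply adj_of_prel
      · simp only [ne_eq, Option.some.injEq, Prod.mk.injEq, not_and]
        intro _
        omega
      · right
        exact ⟨rfl, by omega, by omega⟩
    · by_cases c2 : ρ + 1 = dOf t r
      · rw [posE_lt (by omega), ← c2, posE_eqd]
        apply adj_of_prel
        · simp
        · right
          exact ⟨by omega, by omega⟩
      · by_cases c3 : ρ = dOf t r
        · rw [c3, posE_eqd, posE_gt (by omega)]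
          apply adj_of_prel
          · simp
          · left
            exact ⟨by omega, by omega⟩
        · rw [posE_gt (by omega), posE_gt (by omega)]
          apply adj_of_prel
          · simp only [ne_eq, Option.some.injEq, Prod.mk.injEq, not_and]
            intro _
            omega
          · left
            exact ⟨rfl, by omega, by omega⟩
  · rw [extraP]
    apply adj_of_prel
    · simp
    · left
      exact ⟨rfl, rfl, by omega⟩

end Valid

section Pos
variable {m n : ℕ} (s : Fin n → Fin m) (b : Fin n → Bool)

/-- Position of the root item during block `t`, phase `φ`. -/
def cPos (t φ : ℕ) (ht : t < n) (bt : Bool) : PV m n :=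
  if φ = 1 then some (Sum.inl ⟨t, ht⟩, 0)
  else if φ ≤ 3 then some (Sum.inl ⟨t, ht⟩, 1)
  else if bt then
    (if φ ≤ 5 then some (Sum.inl ⟨t, ht⟩, 0) else if φ = 6 then none
      else some (Sum.inr (Sum.inl ⟨m+t, by omega⟩), 0))
  else (if φ ≤ 6 then some (Sum.inl ⟨t, ht⟩, 1) else some (Sum.inl ⟨t, ht⟩, 0))

/-- Position of the active slot item during block `t`, phase `φ`. -/
def zPos (t φ : ℕ) (ht : t < n) (bt : Bool) : PV m n :=
  if φ = 1 then some (Sum.inr (Sum.inl (aFun s t (s ⟨t, ht⟩))), 0)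
  else if φ = 2 then none
  else if φ = 3 then some (Sum.inl ⟨t, ht⟩, 0)
  else if bt then
    (if φ ≤ 6 then some (Sum.inl ⟨t, ht⟩, 1) else some (Sum.inl ⟨t, ht⟩, 0))
  else (if φ ≤ 5 then some (Sum.inl ⟨t, ht⟩, 0) else if φ = 6 then none
    else some (Sum.inr (Sum.inl ⟨m+t, by omega⟩), 0))

def phase0Pos (t : ℕ) (o : Option (Fin m)) : PV m n :=
  match fStar s b t o with
  | none => none
  | some i => some (Sum.inr (Sum.inl (aFun s t i)), 0)

def itemPos (τ : ℕ) (o : Option (Fin m)) : PV m n :=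
  if h : τ/8 < n ∧ τ%8 ≠ 0 then
    match fStar s b (τ/8) o with
    | none => cPos (τ/8) (τ%8) h.1 (b ⟨τ/8, h.1⟩)
    | some i => if i = s ⟨τ/8, h.1⟩ then zPos s (τ/8) (τ%8) h.1 (b ⟨τ/8, h.1⟩)
        else some (Sum.inr (Sum.inl (aFun s (τ/8) i)), 0)
  else phase0Pos s b (τ/8) o

/-- Expected position of every token after `τ` rounds. -/
def expPos (τ : ℕ) : PTok s → PV m n
  | Sum.inl o => itemPos s b τ o
  | Sum.inr (Sum.inl (t, r)) => posE (xB s t r) (yB s t r) (dOf t r) τ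
  | Sum.inr (Sum.inr v) => applySched ((scaffold s).take τ) v.val

lemma phase0_none {t : ℕ} {o} (h : fStar s b t o = none) : phase0Pos s b t o = none := by
  rw [phase0Pos, h]

lemma phase0_some {t : ℕ} {o i} (h : fStar s b t o = some i) :
    phase0Pos s b t o = some (Sum.inr (Sum.inl (aFun s t i)), 0) := by
  rw [phase0Pos, h]

lemma itemPos_c {t φ : ℕ} (ht : t < n) (hφ0 : φ ≠ 0) (hφ8 : φ < 8) {o}
    (hstar : fStar s b t o = none) :
    itemPos s b (8*t+φ) o = cPos t φ ht (b ⟨t, ht⟩) := by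
  have hdiv : (8*t+φ)/8 = t := by omega
  have hmod : (8*t+φ)%8 = φ := by omega
  simp only [itemPos, hdiv, hmod]
  rw [dif_pos ⟨ht, hφ0⟩, hstar]

lemma itemPos_z {t φ : ℕ} (ht : t < n) (hφ0 : φ ≠ 0) (hφ8 : φ < 8) {o}
    (hstar : fStar s b t o = some (s ⟨t, ht⟩)) :
    itemPos s b (8*t+φ) o = zPos s t φ ht (b ⟨t, ht⟩) := by
  have hdiv : (8*t+φ)/8 = t := by omega
  have hmod : (8*t+φ)%8 = φ := by omega
  simp only [itemPos, hdiv, hmod]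
  rw [dif_pos ⟨ht, hφ0⟩, hstar]
  simp

lemma itemPos_i {t φ : ℕ} (ht : t < n) (hφ0 : φ ≠ 0) (hφ8 : φ < 8) {o i}
    (hstar : fStar s b t o = some i) (hi : i ≠ s ⟨t, ht⟩) :
    itemPos s b (8*t+φ) o = some (Sum.inr (Sum.inl (aFun s t i)), 0) := by
  have hdiv : (8*t+φ)/8 = t := by omega
  have hmod : (8*t+φ)%8 = φ := by omega
  simp only [itemPos, hdiv, hmod]
  rw [dif_pos ⟨ht, hφ0⟩, hstar]
  simp [hi]

lemma itemPos_phase0 (t : ℕ) (o) : itemPos s b (8*t) o = phase0Pos s b t o := by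
  have hdiv : (8*t)/8 = t := by omega
  have hmod : (8*t)%8 = 0 := by omega
  simp only [itemPos, hdiv, hmod]
  rw [dif_neg (by simp)]

lemma itemPos_phase8 (t : ℕ) (o) : itemPos s b (8*t+8) o = phase0Pos s b (t+1) o := by
  have hdiv : (8*t+8)/8 = t+1 := by omega
  have hmod : (8*t+8)%8 = 0 := by omega
  simp only [itemPos, hdiv, hmod]
  rw [dif_neg (by simp)]

lemma modSched_length : (modSched s b).length = 8*n := List.length_ofFn

lemma applySched_take_succ {τ : ℕ} (hτ : τ < 8*n) (v : PV m n) :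
    applySched ((modSched s b).take (τ+1)) v
      = (modRound s b τ).foldl (fun v e => swapV e v)
          (applySched ((modSched s b).take τ) v) := by
  have hg : (modSched s b)[τ]? = some (modRound s b τ) := by
    rw [List.getElem?_eq_getElem (by rw [modSched_length]; exact hτ)]
    exact congrArg some (List.getElem_ofFn _)
  rw [applySched, List.take_succ, hg, List.foldl_append]
  rfl

lemma extraSw_false (ρ : ℕ) : extraSw (fun _ : Fin n => false) ρ = ([] : List (PV m n × PV m n)) := by
  rw [extraSw]
  rw [List.eq_nil_iff_forall_not_mem]
  intro e he
  rw [List.mem_flatten] at he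
  obtain ⟨l, hl, hel⟩ := he
  rw [List.mem_ofFn] at hl
  obtain ⟨t, rfl⟩ := hl
  have : e ∈ (if ρ = 8*t.val+3 ∧ false = true then [extraP t] else ([] : List (PV m n × PV m n))) := hel
  rw [if_neg (by simp)] at this
  simp at this

lemma modSched_false : modSched s (fun _ => false) = scaffold s := by
  rw [modSched, scaffold_eq]
  congr 1
  funext τ
  rw [modRound, extraSw_false, List.append_nil]

/-- All the ways a vertex in a swap branch can be an endpoint of a swap of round `ρ`. -/
lemma touch_w_round {ρ tv j : ℕ} (ht : tv < n) {e : PV m n × PV m n}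
    (he : e ∈ modRound s b ρ)
    (hv : some (Sum.inl ⟨tv, ht⟩, j) = e.1 ∨ some (Sum.inl ⟨tv, ht⟩, j) = e.2) :
    (j+ρ+1 = 8*tv+1 ∨ j+ρ+2 = 8*tv+1 ∨ j+ρ+1 = 8*tv+3 ∨ j+ρ+2 = 8*tv+3
      ∨ ρ = 8*tv+6+j ∨ ρ+1 = 8*tv+6+j ∨ ρ = 8*tv+8+j ∨ ρ+1 = 8*tv+8+j)
    ∨ (ρ = 8*tv+3 ∧ b ⟨tv, ht⟩ = true ∧ j ≤ 1) := by
  rw [mem_modRound] at he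
  rcases he with ⟨t', r', rfl⟩ | ⟨t', h1, h2, rfl⟩
  · left
    have hd' := @dOf_def n t' r'
    have hr' := r'.isLt
    rcases hv with hv | hv
    · obtain ⟨hteq, hc⟩ := touch_w s hv.symm
      have htv : t'.val = tv := congrArg Fin.val hteq
      rcases hc with ⟨u1, u2, u3⟩ | ⟨u1, u2, u3⟩ <;> omega
    · obtain ⟨hteq, hc⟩ := touch_w s hv.symm
      have htv : t'.val = tv := congrArg Fin.val hteq
      rcases hc with ⟨u1, u2, u3⟩ | ⟨u1, u2, u3⟩ <;> omega
  · right
    rcases hv with hv | hv <;> rw [extraP] at hv <;>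
      simp only [Option.some.injEq, Prod.mk.injEq, Sum.inl.injEq] at hv
    · have : t' = ⟨tv, ht⟩ := hv.1.symm
      exact ⟨by rw [h1, this], by rw [← this]; exact h2, by omega⟩
    · have : t' = ⟨tv, ht⟩ := hv.1.symm
      exact ⟨by rw [h1, this], by rw [← this]; exact h2, by omega⟩

/-- All the ways a vertex at distance 1 from the root in a slot branch can be an
endpoint of a swap of round `ρ`. -/
lemma touch_slot_round {ρ : ℕ} {q : Fin (m+n)} {e : PV m n × PV m n}
    (he : e ∈ modRound s b ρ)
    (hv : some (Sum.inr (Sum.inl q), 0) = e.1 ∨ some (Sum.inr (Sum.inl q), 0) = e.2) :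
    ∃ t' : Fin n, ((q : ℕ) = m + t'.val ∧ (ρ = 8*t'.val+6 ∨ ρ+1 = 8*t'.val+6)) ∨
      (q = aFun s t'.val (s t') ∧ (ρ = 8*t'.val+2 ∨ ρ+1 = 8*t'.val+2)) := by
  rw [mem_modRound] at he
  rcases he with ⟨t', r', rfl⟩ | ⟨t', h1, h2, rfl⟩
  · refine ⟨t', ?_⟩
    rcases hv with hv | hv
    · rcases touch_slot s hv.symm with ⟨u1, u2⟩ | ⟨u1, u2⟩
      · exact Or.inl ⟨u1, Or.inl u2⟩
      · exact Or.inr ⟨u1, Or.inl u2⟩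
    · rcases touch_slot s hv.symm with ⟨u1, u2⟩ | ⟨u1, u2⟩
      · exact Or.inl ⟨u1, Or.inr u2⟩
      · exact Or.inr ⟨u1, Or.inr u2⟩
  · exfalso
    rcases hv with hv | hv <;> rw [extraP] at hv <;>
      simp only [Option.some.injEq, Prod.mk.injEq] at hv <;> exact absurd hv.1 (by simp)

lemma swE_cross_in {ρ : ℕ} (t : Fin n) (r : Fin 4) (hρ : ρ + 1 = dOf t r) :
    swE s t r ρ = (some (xB s t r, 0), none) := by
  rw [swE, posE_lt (by omega), show dOf t r - ρ - 1 = 0 from by omega, hρ, posE_eqd]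

lemma swE_cross_out {ρ : ℕ} (t : Fin n) (r : Fin 4) (hρ : ρ = dOf t r) :
    swE s t r ρ = (none, some (yB s t r, 0)) := by
  rw [swE, hρ, posE_eqd, posE_gt (by omega),
    show dOf t r + 1 - dOf t r - 1 = 0 from by omega]

lemma swE_in_step {ρ : ℕ} (t : Fin n) (r : Fin 4) (hρ : ρ + 1 < dOf t r) :
    swE s t r ρ = (some (xB s t r, dOf t r - ρ - 1), some (xB s t r, dOf t r - ρ - 2)) := by
  rw [swE, posE_lt (by omega), posE_lt (by omega),
    show dOf t r - (ρ+1) - 1 = dOf t r - ρ - 2 from by omega]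

lemma swE_out_step {ρ : ℕ} (t : Fin n) (r : Fin 4) (hρ : dOf t r < ρ) :
    swE s t r ρ = (some (yB s t r, ρ - dOf t r - 1), some (yB s t r, ρ - dOf t r)) := by
  rw [swE, posE_gt (by omega), posE_gt (by omega),
    show ρ + 1 - dOf t r - 1 = ρ - dOf t r from by omega]

end Pos

section Eval
variable {m n : ℕ} (s : Fin n → Fin m) (b : Fin n → Bool)

lemma dOf0 (t : Fin n) : dOf t 0 = 8*t.val+1 := rfl
lemma dOf1 (t : Fin n) : dOf t 1 = 8*t.val+3 := rfl
lemma dOf2 (t : Fin n) : dOf t 2 = 8*t.val+5 := rfl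
lemma dOf3 (t : Fin n) : dOf t 3 = 8*t.val+7 := rfl
lemma xB0 (t : Fin n) : xB s t 0 = Sum.inl t := rfl
lemma xB1 (t : Fin n) : xB s t 1 = Sum.inl t := rfl
lemma xB3 (t : Fin n) : xB s t 3 = Sum.inr (Sum.inl ⟨m + t.val, Nat.add_lt_add_left t.isLt m⟩) := rfl
lemma yB0 (t : Fin n) : yB s t 0 = Sum.inr (Sum.inl (aFun s t.val (s t))) := rfl
lemma yB2 (t : Fin n) : yB s t 2 = Sum.inl t := rfl
lemma yB3 (t : Fin n) : yB s t 3 = Sum.inl t := rfl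

lemma aFun_succ_hit (t : ℕ) (ht : t < n) :
    aFun s (t+1) (s ⟨t, ht⟩) = ⟨m+t, Nat.add_lt_add_left ht m⟩ := by
  simp only [aFun]
  rw [dif_pos ht]
  simp

lemma aFun_succ_miss (t : ℕ) (ht : t < n) {i : Fin m} (hi : i ≠ s ⟨t, ht⟩) :
    aFun s (t+1) i = aFun s t i := by
  simp only [aFun]
  rw [dif_pos ht, if_neg (fun h => hi h.symm)]

lemma foldl_fst {ρ : ℕ} {e : PV m n × PV m n} (he : e ∈ modRound s b ρ) :
    (modRound s b ρ).foldl (fun v e => swapV e v) e.1 = e.2 := by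
  rw [foldl_swap_eq _ (round_pairwise s b ρ) e he _ (Or.inl rfl), swapV_left]

lemma foldl_snd {ρ : ℕ} {e : PV m n × PV m n} (he : e ∈ modRound s b ρ) :
    (modRound s b ρ).foldl (fun v e => swapV e v) e.2 = e.1 := by
  rw [foldl_swap_eq _ (round_pairwise s b ρ) e he _ (Or.inr rfl), swapV_right]

lemma w_untouched {ρ tv j : ℕ} (ht : tv < n)
    (h1 : ¬(j+ρ+1 = 8*tv+1 ∨ j+ρ+2 = 8*tv+1 ∨ j+ρ+1 = 8*tv+3 ∨ j+ρ+2 = 8*tv+3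
      ∨ ρ = 8*tv+6+j ∨ ρ+1 = 8*tv+6+j ∨ ρ = 8*tv+8+j ∨ ρ+1 = 8*tv+8+j))
    (h2 : ¬(ρ = 8*tv+3 ∧ b ⟨tv, ht⟩ = true ∧ j ≤ 1)) :
    (modRound s b ρ).foldl (fun v e => swapV e v) (some (Sum.inl ⟨tv, ht⟩, j))
      = some (Sum.inl ⟨tv, ht⟩, j) := by
  apply foldl_swap_eq_self
  intro e he
  constructor <;> intro hc
  · rcases touch_w_round s b ht he (Or.inl hc) with h | h
    exacts [h1 h, h2 h]
  · rcases touch_w_round s b ht he (Or.inr hc) with h | h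
    exacts [h1 h, h2 h]

lemma slot_untouched {ρ : ℕ} {q : Fin (m+n)}
    (h : ∀ t' : Fin n, ¬(((q : ℕ) = m + t'.val ∧ (ρ = 8*t'.val+6 ∨ ρ+1 = 8*t'.val+6)) ∨
      (q = aFun s t'.val (s t') ∧ (ρ = 8*t'.val+2 ∨ ρ+1 = 8*t'.val+2)))) :
    (modRound s b ρ).foldl (fun v e => swapV e v) (some (Sum.inr (Sum.inl q), 0))
      = some (Sum.inr (Sum.inl q), 0) := by
  apply foldl_swap_eq_self
  intro e he
  constructor <;> intro hc
  · obtain ⟨t', ht'⟩ := touch_slot_round s b he (Or.inl hc)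
    exact h t' ht'
  · obtain ⟨t', ht'⟩ := touch_slot_round s b he (Or.inr hc)
    exact h t' ht'

end Eval

section StepItem
variable {m n : ℕ} (s : Fin n → Fin m) (b : Fin n → Bool)

lemma itemPos_i_all {t φ : ℕ} (ht : t < n) (hφ8 : φ < 8) {o i}
    (hstar : fStar s b t o = some i) (hi : i ≠ s ⟨t, ht⟩) :
    itemPos s b (8*t+φ) o = some (Sum.inr (Sum.inl (aFun s t i)), 0) := by
  by_cases h0 : φ = 0
  · subst h0
    rw [show 8*t+0 = 8*t from rfl, itemPos_phase0, phase0_some s b hstar]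
  · exact itemPos_i s b ht h0 hφ8 hstar hi

lemma step_item (t φ : ℕ) (ht : t < n) (hφ : φ < 8) (o : Option (Fin m)) :
    (modRound s b (8*t+φ)).foldl (fun v e => swapV e v) (itemPos s b (8*t+φ) o)
      = itemPos s b (8*t+φ+1) o := by
  have hd0 : dOf (⟨t, ht⟩ : Fin n) (0 : Fin 4) = 8*t+1 := rfl
  have hd1 : dOf (⟨t, ht⟩ : Fin n) (1 : Fin 4) = 8*t+3 := rfl
  have hd2 : dOf (⟨t, ht⟩ : Fin n) (2 : Fin 4) = 8*t+5 := rfl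
  have hd3 : dOf (⟨t, ht⟩ : Fin n) (3 : Fin 4) = 8*t+7 := rfl
  rcases hstar : fStar s b t o with _ | i
  · -- c role: the item at the root at the start of block t
    rcases hb : b ⟨t, ht⟩ with _ | _
    · -- b = false
      interval_cases φ
      · -- φ = 0 : root → w0
        rw [show (8*t+0 : ℕ) = 8*t from rfl, itemPos_phase0, phase0_none s b hstar,
          show (8*t+1 : ℕ) = 8*t+1 from rfl,
          itemPos_c s b ht (by norm_num) (by norm_num) hstar, hb,
          show cPos t 1 ht false = some (Sum.inl ⟨t,ht⟩, 0) from by norm_num [cPos]]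
        have he : ((some (Sum.inl ⟨t,ht⟩, 0), none) : PV m n × PV m n)
            ∈ modRound s b (8*t) := by
          rw [mem_modRound]
          refine Or.inl ⟨⟨t,ht⟩, 0, ?_⟩
          rw [swE_cross_in s ⟨t,ht⟩ 0 (by rw [hd0]), xB0]
        exact foldl_snd s b he
      · -- φ = 1 : w0 → w1
        rw [itemPos_c s b ht (by norm_num) (by norm_num) hstar, hb,
          show cPos t 1 ht false = some (Sum.inl ⟨t,ht⟩, 0) from by norm_num [cPos],
          show (8*t+1+1 : ℕ) = 8*t+2 from by omega,
          itemPos_c s b ht (by norm_num) (by norm_num) hstar, hb,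
          show cPos t 2 ht false = some (Sum.inl ⟨t,ht⟩, 1) from by norm_num [cPos]]
        have he : ((some (Sum.inl ⟨t,ht⟩, 1), some (Sum.inl ⟨t,ht⟩, 0)) : PV m n × PV m n)
            ∈ modRound s b (8*t+1) := by
          rw [mem_modRound]
          refine Or.inl ⟨⟨t,ht⟩, 1, ?_⟩
          rw [swE_in_step s ⟨t,ht⟩ 1 (by rw [hd1]; omega), xB1, hd1,
            show 8*t+3-(8*t+1)-1 = 1 from by omega, show 8*t+3-(8*t+1)-2 = 0 from by omega]
        exact foldl_snd s b he
      · -- φ = 2 : w1 untouched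
        rw [itemPos_c s b ht (by norm_num) (by norm_num) hstar, hb,
          show cPos t 2 ht false = some (Sum.inl ⟨t,ht⟩, 1) from by norm_num [cPos],
          show (8*t+2+1 : ℕ) = 8*t+3 from by omega,
          itemPos_c s b ht (by norm_num) (by norm_num) hstar, hb,
          show cPos t 3 ht false = some (Sum.inl ⟨t,ht⟩, 1) from by norm_num [cPos]]
        exact w_untouched s b ht (by omega) (by simp [hb])
      · -- φ = 3 : w1 untouched (no extra since b false)
        rw [itemPos_c s b ht (by norm_num) (by norm_num) hstar, hb,
          show cPos t 3 ht false = some (Sum.inl ⟨t,ht⟩, 1) from by norm_num [cPos],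
          show (8*t+3+1 : ℕ) = 8*t+4 from by omega,
          itemPos_c s b ht (by norm_num) (by norm_num) hstar, hb,
          show cPos t 4 ht false = some (Sum.inl ⟨t,ht⟩, 1) from by norm_num [cPos]]
        exact w_untouched s b ht (by omega) (by simp [hb])
      · -- φ = 4 : w1 untouched
        rw [itemPos_c s b ht (by norm_num) (by norm_num) hstar, hb,
          show cPos t 4 ht false = some (Sum.inl ⟨t,ht⟩, 1) from by norm_num [cPos],
          show (8*t+4+1 : ℕ) = 8*t+5 from by omega,
          itemPos_c s b ht (by norm_num) (by norm_num) hstar, hb,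
          show cPos t 5 ht false = some (Sum.inl ⟨t,ht⟩, 1) from by norm_num [cPos]]
        exact w_untouched s b ht (by omega) (by simp [hb])
      · -- φ = 5 : w1 untouched
        rw [itemPos_c s b ht (by norm_num) (by norm_num) hstar, hb,
          show cPos t 5 ht false = some (Sum.inl ⟨t,ht⟩, 1) from by norm_num [cPos],
          show (8*t+5+1 : ℕ) = 8*t+6 from by omega,
          itemPos_c s b ht (by norm_num) (by norm_num) hstar, hb,
          show cPos t 6 ht false = some (Sum.inl ⟨t,ht⟩, 1) from by norm_num [cPos]]
        exact w_untouched s b ht (by omega) (by simp [hb])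
      · -- φ = 6 : w1 → w0
        rw [itemPos_c s b ht (by norm_num) (by norm_num) hstar, hb,
          show cPos t 6 ht false = some (Sum.inl ⟨t,ht⟩, 1) from by norm_num [cPos],
          show (8*t+6+1 : ℕ) = 8*t+7 from by omega,
          itemPos_c s b ht (by norm_num) (by norm_num) hstar, hb,
          show cPos t 7 ht false = some (Sum.inl ⟨t,ht⟩, 0) from by norm_num [cPos]]
        have he : ((some (Sum.inl ⟨t,ht⟩, 0), some (Sum.inl ⟨t,ht⟩, 1)) : PV m n × PV m n)
            ∈ modRound s b (8*t+6) := by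
          rw [mem_modRound]
          refine Or.inl ⟨⟨t,ht⟩, 2, ?_⟩
          rw [swE_out_step s ⟨t,ht⟩ 2 (by rw [hd2]; omega), yB2, hd2,
            show 8*t+6-(8*t+5)-1 = 0 from by omega, show 8*t+6-(8*t+5) = 1 from by omega]
        exact foldl_snd s b he
      · -- φ = 7 : w0 → root
        rw [itemPos_c s b ht (by norm_num) (by norm_num) hstar, hb,
          show cPos t 7 ht false = some (Sum.inl ⟨t,ht⟩, 0) from by norm_num [cPos],
          show (8*t+7+1 : ℕ) = 8*t+8 from by omega, itemPos_phase8]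
        have hf : fStar s b (t+1) o = none := by
          rw [fStar_succ s b t ht, if_neg (by simp [hb]), hstar]
        rw [phase0_none s b hf]
        have he : ((none, some (Sum.inl ⟨t,ht⟩, 0)) : PV m n × PV m n)
            ∈ modRound s b (8*t+7) := by
          rw [mem_modRound]
          refine Or.inl ⟨⟨t,ht⟩, 3, ?_⟩
          rw [swE_cross_out s ⟨t,ht⟩ 3 (by rw [hd3]), yB3]
        exact foldl_snd s b he
    · -- b = true
      interval_cases φ
      · -- φ = 0 : root → w0
        rw [show (8*t+0 : ℕ) = 8*t from rfl, itemPos_phase0, phase0_none s b hstar,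
          itemPos_c s b ht (by norm_num) (by norm_num) hstar, hb,
          show cPos t 1 ht true = some (Sum.inl ⟨t,ht⟩, 0) from by norm_num [cPos]]
        have he : ((some (Sum.inl ⟨t,ht⟩, 0), none) : PV m n × PV m n)
            ∈ modRound s b (8*t) := by
          rw [mem_modRound]
          refine Or.inl ⟨⟨t,ht⟩, 0, ?_⟩
          rw [swE_cross_in s ⟨t,ht⟩ 0 (by rw [hd0]), xB0]
        exact foldl_snd s b he
      · -- φ = 1 : w0 → w1
        rw [itemPos_c s b ht (by norm_num) (by norm_num) hstar, hb,
          show cPos t 1 ht true = some (Sum.inl ⟨t,ht⟩, 0) from by norm_num [cPos],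
          show (8*t+1+1 : ℕ) = 8*t+2 from by omega,
          itemPos_c s b ht (by norm_num) (by norm_num) hstar, hb,
          show cPos t 2 ht true = some (Sum.inl ⟨t,ht⟩, 1) from by norm_num [cPos]]
        have he : ((some (Sum.inl ⟨t,ht⟩, 1), some (Sum.inl ⟨t,ht⟩, 0)) : PV m n × PV m n)
            ∈ modRound s b (8*t+1) := by
          rw [mem_modRound]
          refine Or.inl ⟨⟨t,ht⟩, 1, ?_⟩
          rw [swE_in_step s ⟨t,ht⟩ 1 (by rw [hd1]; omega), xB1, hd1,
            show 8*t+3-(8*t+1)-1 = 1 from by omega, show 8*t+3-(8*t+1)-2 = 0 from by omega]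
        exact foldl_snd s b he
      · -- φ = 2 : w1 untouched
        rw [itemPos_c s b ht (by norm_num) (by norm_num) hstar, hb,
          show cPos t 2 ht true = some (Sum.inl ⟨t,ht⟩, 1) from by norm_num [cPos],
          show (8*t+2+1 : ℕ) = 8*t+3 from by omega,
          itemPos_c s b ht (by norm_num) (by norm_num) hstar, hb,
          show cPos t 3 ht true = some (Sum.inl ⟨t,ht⟩, 1) from by norm_num [cPos]]
        exact w_untouched s b ht (by omega) (by rintro ⟨hA, _, _⟩; omega)
      · -- φ = 3 : w1 → w0 via the extra swap
        rw [itemPos_c s b ht (by norm_num) (by norm_num) hstar, hb,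
          show cPos t 3 ht true = some (Sum.inl ⟨t,ht⟩, 1) from by norm_num [cPos],
          show (8*t+3+1 : ℕ) = 8*t+4 from by omega,
          itemPos_c s b ht (by norm_num) (by norm_num) hstar, hb,
          show cPos t 4 ht true = some (Sum.inl ⟨t,ht⟩, 0) from by norm_num [cPos]]
        have he : extraP (⟨t,ht⟩ : Fin n) ∈ modRound s b (8*t+3) := by
          rw [mem_modRound]
          exact Or.inr ⟨⟨t,ht⟩, rfl, hb, rfl⟩
        exact foldl_snd s b he
      · -- φ = 4 : w0 untouched
        rw [itemPos_c s b ht (by norm_num) (by norm_num) hstar, hb,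
          show cPos t 4 ht true = some (Sum.inl ⟨t,ht⟩, 0) from by norm_num [cPos],
          show (8*t+4+1 : ℕ) = 8*t+5 from by omega,
          itemPos_c s b ht (by norm_num) (by norm_num) hstar, hb,
          show cPos t 5 ht true = some (Sum.inl ⟨t,ht⟩, 0) from by norm_num [cPos]]
        exact w_untouched s b ht (by omega) (by rintro ⟨hA, _, _⟩; omega)
      · -- φ = 5 : w0 → root
        rw [itemPos_c s b ht (by norm_num) (by norm_num) hstar, hb,
          show cPos t 5 ht true = some (Sum.inl ⟨t,ht⟩, 0) from by norm_num [cPos],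
          show (8*t+5+1 : ℕ) = 8*t+6 from by omega,
          itemPos_c s b ht (by norm_num) (by norm_num) hstar, hb,
          show cPos t 6 ht true = (none : PV m n) from by norm_num [cPos]]
        have he : ((none, some (Sum.inl ⟨t,ht⟩, 0)) : PV m n × PV m n)
            ∈ modRound s b (8*t+5) := by
          rw [mem_modRound]
          refine Or.inl ⟨⟨t,ht⟩, 2, ?_⟩
          rw [swE_cross_out s ⟨t,ht⟩ 2 (by rw [hd2]), yB2]
        exact foldl_snd s b he
      · -- φ = 6 : root → B0
        rw [itemPos_c s b ht (by norm_num) (by norm_num) hstar, hb,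
          show cPos t 6 ht true = (none : PV m n) from by norm_num [cPos],
          show (8*t+6+1 : ℕ) = 8*t+7 from by omega,
          itemPos_c s b ht (by norm_num) (by norm_num) hstar, hb,
          show cPos t 7 ht true
            = some (Sum.inr (Sum.inl ⟨m+t, by omega⟩), 0) from by norm_num [cPos]]
        have he : ((some (Sum.inr (Sum.inl (⟨m+t, by omega⟩ : Fin (m+n))), 0), none)
            : PV m n × PV m n) ∈ modRound s b (8*t+6) := by
          rw [mem_modRound]
          refine Or.inl ⟨⟨t,ht⟩, 3, ?_⟩
          rw [swE_cross_in s ⟨t,ht⟩ 3 (by rw [hd3]), xB3]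
        exact foldl_snd s b he
      · -- φ = 7 : B0 untouched
        rw [itemPos_c s b ht (by norm_num) (by norm_num) hstar, hb,
          show cPos t 7 ht true
            = some (Sum.inr (Sum.inl ⟨m+t, by omega⟩), 0) from by norm_num [cPos],
          show (8*t+7+1 : ℕ) = 8*t+8 from by omega, itemPos_phase8]
        have hf : fStar s b (t+1) o = some (s ⟨t, ht⟩) := by
          rw [fStar_succ s b t ht, if_pos hb, hstar]
          exact swapV_left _
        rw [phase0_some s b hf, aFun_succ_hit s t ht]
        apply slot_untouched
        intro t'
        rintro (⟨hq, hts⟩ | ⟨hq, hts⟩) <;> omega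
  · -- some i
    by_cases hi : i = s ⟨t, ht⟩
    · -- z role
      rw [hi] at hstar
      rcases hb : b ⟨t, ht⟩ with _ | _
      · -- b = false
        interval_cases φ
        · -- φ = 0 : A0 untouched
          rw [show (8*t+0 : ℕ) = 8*t from rfl, itemPos_phase0, phase0_some s b hstar,
            itemPos_z s b ht (by norm_num) (by norm_num) hstar, hb,
            show zPos s t 1 ht false
              = some (Sum.inr (Sum.inl (aFun s t (s ⟨t,ht⟩))), 0) from by norm_num [zPos]]
          apply slot_untouched
          intro t'
          rintro (⟨hq, hts⟩ | ⟨hq, hts⟩) <;> omega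
        · -- φ = 1 : A0 → root
          rw [itemPos_z s b ht (by norm_num) (by norm_num) hstar, hb,
            show zPos s t 1 ht false
              = some (Sum.inr (Sum.inl (aFun s t (s ⟨t,ht⟩))), 0) from by norm_num [zPos],
            show (8*t+1+1 : ℕ) = 8*t+2 from by omega,
            itemPos_z s b ht (by norm_num) (by norm_num) hstar, hb,
            show zPos s t 2 ht false = (none : PV m n) from by norm_num [zPos]]
          have he : ((none, some (Sum.inr (Sum.inl (aFun s t (s ⟨t,ht⟩))), 0))
              : PV m n × PV m n) ∈ modRound s b (8*t+1) := by
            rw [mem_modRound]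
            refine Or.inl ⟨⟨t,ht⟩, 0, ?_⟩
            rw [swE_cross_out s ⟨t,ht⟩ 0 (by rw [hd0]), yB0]
          exact foldl_snd s b he
        · -- φ = 2 : root → w0
          rw [itemPos_z s b ht (by norm_num) (by norm_num) hstar, hb,
            show zPos s t 2 ht false = (none : PV m n) from by norm_num [zPos],
            show (8*t+2+1 : ℕ) = 8*t+3 from by omega,
            itemPos_z s b ht (by norm_num) (by norm_num) hstar, hb,
            show zPos s t 3 ht false = some (Sum.inl ⟨t,ht⟩, 0) from by norm_num [zPos]]
          have he : ((some (Sum.inl ⟨t,ht⟩, 0), none) : PV m n × PV m n)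
              ∈ modRound s b (8*t+2) := by
            rw [mem_modRound]
            refine Or.inl ⟨⟨t,ht⟩, 1, ?_⟩
            rw [swE_cross_in s ⟨t,ht⟩ 1 (by rw [hd1]), xB1]
          exact foldl_snd s b he
        · -- φ = 3 : w0 untouched
          rw [itemPos_z s b ht (by norm_num) (by norm_num) hstar, hb,
            show zPos s t 3 ht false = some (Sum.inl ⟨t,ht⟩, 0) from by norm_num [zPos],
            show (8*t+3+1 : ℕ) = 8*t+4 from by omega,
            itemPos_z s b ht (by norm_num) (by norm_num) hstar, hb,
            show zPos s t 4 ht false = some (Sum.inl ⟨t,ht⟩, 0) from by norm_num [zPos]]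
          exact w_untouched s b ht (by omega) (by simp [hb])
        · -- φ = 4 : w0 untouched
          rw [itemPos_z s b ht (by norm_num) (by norm_num) hstar, hb,
            show zPos s t 4 ht false = some (Sum.inl ⟨t,ht⟩, 0) from by norm_num [zPos],
            show (8*t+4+1 : ℕ) = 8*t+5 from by omega,
            itemPos_z s b ht (by norm_num) (by norm_num) hstar, hb,
            show zPos s t 5 ht false = some (Sum.inl ⟨t,ht⟩, 0) from by norm_num [zPos]]
          exact w_untouched s b ht (by omega) (by simp [hb])
        · -- φ = 5 : w0 → root
          rw [itemPos_z s b ht (by norm_num) (by norm_num) hstar, hb,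
            show zPos s t 5 ht false = some (Sum.inl ⟨t,ht⟩, 0) from by norm_num [zPos],
            show (8*t+5+1 : ℕ) = 8*t+6 from by omega,
            itemPos_z s b ht (by norm_num) (by norm_num) hstar, hb,
            show zPos s t 6 ht false = (none : PV m n) from by norm_num [zPos]]
          have he : ((none, some (Sum.inl ⟨t,ht⟩, 0)) : PV m n × PV m n)
              ∈ modRound s b (8*t+5) := by
            rw [mem_modRound]
            refine Or.inl ⟨⟨t,ht⟩, 2, ?_⟩
            rw [swE_cross_out s ⟨t,ht⟩ 2 (by rw [hd2]), yB2]
          exact foldl_snd s b he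
        · -- φ = 6 : root → B0
          rw [itemPos_z s b ht (by norm_num) (by norm_num) hstar, hb,
            show zPos s t 6 ht false = (none : PV m n) from by norm_num [zPos],
            show (8*t+6+1 : ℕ) = 8*t+7 from by omega,
            itemPos_z s b ht (by norm_num) (by norm_num) hstar, hb,
            show zPos s t 7 ht false
              = some (Sum.inr (Sum.inl ⟨m+t, by omega⟩), 0) from by norm_num [zPos]]
          have he : ((some (Sum.inr (Sum.inl (⟨m+t, by omega⟩ : Fin (m+n))), 0), none)
              : PV m n × PV m n) ∈ modRound s b (8*t+6) := by
            rw [mem_modRound]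
            refine Or.inl ⟨⟨t,ht⟩, 3, ?_⟩
            rw [swE_cross_in s ⟨t,ht⟩ 3 (by rw [hd3]), xB3]
          exact foldl_snd s b he
        · -- φ = 7 : B0 untouched
          rw [itemPos_z s b ht (by norm_num) (by norm_num) hstar, hb,
            show zPos s t 7 ht false
              = some (Sum.inr (Sum.inl ⟨m+t, by omega⟩), 0) from by norm_num [zPos],
            show (8*t+7+1 : ℕ) = 8*t+8 from by omega, itemPos_phase8]
          have hf : fStar s b (t+1) o = some (s ⟨t, ht⟩) := by
            rw [fStar_succ s b t ht, if_neg (by simp [hb]), hstar]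
          rw [phase0_some s b hf, aFun_succ_hit s t ht]
          apply slot_untouched
          intro t'
          rintro (⟨hq, hts⟩ | ⟨hq, hts⟩) <;> omega
      · -- b = true
        interval_cases φ
        · -- φ = 0 : A0 untouched
          rw [show (8*t+0 : ℕ) = 8*t from rfl, itemPos_phase0, phase0_some s b hstar,
            itemPos_z s b ht (by norm_num) (by norm_num) hstar, hb,
            show zPos s t 1 ht true
              = some (Sum.inr (Sum.inl (aFun s t (s ⟨t,ht⟩))), 0) from by norm_num [zPos]]
          apply slot_untouched
          intro t'
          rintro (⟨hq, hts⟩ | ⟨hq, hts⟩) <;> omega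
        · -- φ = 1 : A0 → root
          rw [itemPos_z s b ht (by norm_num) (by norm_num) hstar, hb,
            show zPos s t 1 ht true
              = some (Sum.inr (Sum.inl (aFun s t (s ⟨t,ht⟩))), 0) from by norm_num [zPos],
            show (8*t+1+1 : ℕ) = 8*t+2 from by omega,
            itemPos_z s b ht (by norm_num) (by norm_num) hstar, hb,
            show zPos s t 2 ht true = (none : PV m n) from by norm_num [zPos]]
          have he : ((none, some (Sum.inr (Sum.inl (aFun s t (s ⟨t,ht⟩))), 0))
              : PV m n × PV m n) ∈ modRound s b (8*t+1) := by
            rw [mem_modRound]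
            refine Or.inl ⟨⟨t,ht⟩, 0, ?_⟩
            rw [swE_cross_out s ⟨t,ht⟩ 0 (by rw [hd0]), yB0]
          exact foldl_snd s b he
        · -- φ = 2 : root → w0
          rw [itemPos_z s b ht (by norm_num) (by norm_num) hstar, hb,
            show zPos s t 2 ht true = (none : PV m n) from by norm_num [zPos],
            show (8*t+2+1 : ℕ) = 8*t+3 from by omega,
            itemPos_z s b ht (by norm_num) (by norm_num) hstar, hb,
            show zPos s t 3 ht true = some (Sum.inl ⟨t,ht⟩, 0) from by norm_num [zPos]]
          have he : ((some (Sum.inl ⟨t,ht⟩, 0), none) : PV m n × PV m n)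
              ∈ modRound s b (8*t+2) := by
            rw [mem_modRound]
            refine Or.inl ⟨⟨t,ht⟩, 1, ?_⟩
            rw [swE_cross_in s ⟨t,ht⟩ 1 (by rw [hd1]), xB1]
          exact foldl_snd s b he
        · -- φ = 3 : w0 → w1 via the extra swap
          rw [itemPos_z s b ht (by norm_num) (by norm_num) hstar, hb,
            show zPos s t 3 ht true = some (Sum.inl ⟨t,ht⟩, 0) from by norm_num [zPos],
            show (8*t+3+1 : ℕ) = 8*t+4 from by omega,
            itemPos_z s b ht (by norm_num) (by norm_num) hstar, hb,
            show zPos s t 4 ht true = some (Sum.inl ⟨t,ht⟩, 1) from by norm_num [zPos]]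
          have he : extraP (⟨t,ht⟩ : Fin n) ∈ modRound s b (8*t+3) := by
            rw [mem_modRound]
            exact Or.inr ⟨⟨t,ht⟩, rfl, hb, rfl⟩
          exact foldl_fst s b he
        · -- φ = 4 : w1 untouched
          rw [itemPos_z s b ht (by norm_num) (by norm_num) hstar, hb,
            show zPos s t 4 ht true = some (Sum.inl ⟨t,ht⟩, 1) from by norm_num [zPos],
            show (8*t+4+1 : ℕ) = 8*t+5 from by omega,
            itemPos_z s b ht (by norm_num) (by norm_num) hstar, hb,
            show zPos s t 5 ht true = some (Sum.inl ⟨t,ht⟩, 1) from by norm_num [zPos]]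
          exact w_untouched s b ht (by omega) (by rintro ⟨hA, _, _⟩; omega)
        · -- φ = 5 : w1 untouched
          rw [itemPos_z s b ht (by norm_num) (by norm_num) hstar, hb,
            show zPos s t 5 ht true = some (Sum.inl ⟨t,ht⟩, 1) from by norm_num [zPos],
            show (8*t+5+1 : ℕ) = 8*t+6 from by omega,
            itemPos_z s b ht (by norm_num) (by norm_num) hstar, hb,
            show zPos s t 6 ht true = some (Sum.inl ⟨t,ht⟩, 1) from by norm_num [zPos]]
          exact w_untouched s b ht (by omega) (by rintro ⟨hA, _, _⟩; omega)
        · -- φ = 6 : w1 → w0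
          rw [itemPos_z s b ht (by norm_num) (by norm_num) hstar, hb,
            show zPos s t 6 ht true = some (Sum.inl ⟨t,ht⟩, 1) from by norm_num [zPos],
            show (8*t+6+1 : ℕ) = 8*t+7 from by omega,
            itemPos_z s b ht (by norm_num) (by norm_num) hstar, hb,
            show zPos s t 7 ht true = some (Sum.inl ⟨t,ht⟩, 0) from by norm_num [zPos]]
          have he : ((some (Sum.inl ⟨t,ht⟩, 0), some (Sum.inl ⟨t,ht⟩, 1)) : PV m n × PV m n)
              ∈ modRound s b (8*t+6) := by
            rw [mem_modRound]
            refine Or.inl ⟨⟨t,ht⟩, 2, ?_⟩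
            rw [swE_out_step s ⟨t,ht⟩ 2 (by rw [hd2]; omega), yB2, hd2,
              show 8*t+6-(8*t+5)-1 = 0 from by omega, show 8*t+6-(8*t+5) = 1 from by omega]
          exact foldl_snd s b he
        · -- φ = 7 : w0 → root
          rw [itemPos_z s b ht (by norm_num) (by norm_num) hstar, hb,
            show zPos s t 7 ht true = some (Sum.inl ⟨t,ht⟩, 0) from by norm_num [zPos],
            show (8*t+7+1 : ℕ) = 8*t+8 from by omega, itemPos_phase8]
          have hf : fStar s b (t+1) o = none := by
            rw [fStar_succ s b t ht, if_pos hb, hstar]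
            exact swapV_right _
          rw [phase0_none s b hf]
          have he : ((none, some (Sum.inl ⟨t,ht⟩, 0)) : PV m n × PV m n)
              ∈ modRound s b (8*t+7) := by
            rw [mem_modRound]
            refine Or.inl ⟨⟨t,ht⟩, 3, ?_⟩
            rw [swE_cross_out s ⟨t,ht⟩ 3 (by rw [hd3]), yB3]
          exact foldl_snd s b he
    · -- inactive item
      have hq0 : itemPos s b (8*t+φ) o = some (Sum.inr (Sum.inl (aFun s t i)), 0) :=
        itemPos_i_all s b ht hφ hstar hi
      have hlt := aFun_lt s t i
      have huntouched : (modRound s b (8*t+φ)).foldl (fun v e => swapV e v)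
          (some (Sum.inr (Sum.inl (aFun s t i)), 0))
            = some (Sum.inr (Sum.inl (aFun s t i)), 0) := by
        apply slot_untouched
        intro t'
        rintro (⟨hq, hts⟩ | ⟨hq, hts⟩)
        · omega
        · have ht'v : t'.val = t := by omega
          have ht'e : t' = ⟨t, ht⟩ := Fin.ext ht'v
          rw [ht'e] at hq
          exact hi (aFun_inj s t hq)
      by_cases h7 : φ = 7
      · subst h7
        rw [hq0, show (8*t+7+1 : ℕ) = 8*t+8 from by omega, itemPos_phase8]
        have hf : fStar s b (t+1) o = some i := by
          rcases hb : b ⟨t, ht⟩ with _ | _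
          · rw [fStar_succ s b t ht, if_neg (by simp [hb]), hstar]
          · rw [fStar_succ s b t ht, if_pos hb, hstar]
            exact swapV_of_ne (by simp) (by simp [hi])
        rw [phase0_some s b hf, aFun_succ_miss s t ht hi]
        exact huntouched
      · rw [hq0, show (8*t+φ+1 : ℕ) = 8*t+(φ+1) from by omega,
          itemPos_i s b ht (by omega) (by omega) hstar hi]
        exact huntouched

end StepItem

section Traj
variable {m n : ℕ} (s : Fin n → Fin m)

lemma step_enf (b : Fin n → Bool) (τ : ℕ) (t : Fin n) (r : Fin 4) :
    (modRound s b τ).foldl (fun v e => swapV e v) (posE (xB s t r) (yB s t r) (dOf t r) τ)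
      = posE (xB s t r) (yB s t r) (dOf t r) (τ+1) := by
  have he : swE s t r τ ∈ modRound s b τ := by
    rw [mem_modRound]
    exact Or.inl ⟨t, r, rfl⟩
  exact foldl_fst s b he

lemma modRound_false (τ : ℕ) : modRound s (fun _ => false) τ = sRound s τ := by
  rw [modRound, extraSw_false, List.append_nil]

lemma scaffold_length : (scaffold s).length = 8*n := by
  rw [scaffold_eq]
  exact List.length_ofFn

theorem traj : ∀ τ, τ ≤ 8*n → ∀ (b : Fin n → Bool) (tok : PTok s),
    applySched ((modSched s b).take τ) (initP s tok) = expPos s b τ tok := by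
  intro τ
  induction τ with
  | zero =>
    intro _ b tok
    match tok with
    | Sum.inl o =>
      show initP s (Sum.inl o) = itemPos s b 0 o
      rw [show (0:ℕ) = 8*0 from rfl, itemPos_phase0]
      match o with
      | none => rfl
      | some i => rfl
    | Sum.inr (Sum.inl (t, r)) =>
      show enfInit s t r = posE (xB s t r) (yB s t r) (dOf t r) 0
      rw [posE_lt (show 0 < dOf t r from by rw [dOf_def]; omega)]
      rfl
    | Sum.inr (Sum.inr v) => rfl
  | succ τ ih =>
    intro hτ b tok
    have hτ' : τ < 8*n := by omega
    rw [applySched_take_succ s b hτ', ih (by omega) b tok]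
    match tok with
    | Sum.inl o =>
      obtain ⟨t, φ, hφ, rfl⟩ : ∃ t φ, φ < 8 ∧ τ = 8*t+φ := ⟨τ/8, τ%8, by omega, by omega⟩
      have ht : t < n := by omega
      exact step_item s b t φ ht hφ o
    | Sum.inr (Sum.inl (t, r)) => exact step_enf s b τ t r
    | Sum.inr (Sum.inr v) =>
      show (modRound s b τ).foldl (fun v e => swapV e v)
          (applySched ((scaffold s).take τ) v.val)
        = applySched ((scaffold s).take (τ+1)) v.val
      have hy : (sRound s τ).foldl (fun v e => swapV e v)
            (applySched ((scaffold s).take τ) v.val)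
          = applySched ((modSched s (fun _ => false)).take (τ+1)) v.val := by
        rw [applySched_take_succ s (fun _ => false) hτ', modSched_false, modRound_false]
      have hsc : applySched ((scaffold s).take (τ+1)) v.val
          = (sRound s τ).foldl (fun v e => swapV e v)
              (applySched ((scaffold s).take τ) v.val) := by
        rw [hy, modSched_false]
      rw [hsc, modRound, List.foldl_append]
      apply foldl_swap_eq_self
      intro e he
      rw [mem_extraSw] at he
      obtain ⟨t, hρ, hbt, rfl⟩ := he
      have ht : t.val < n := t.isLt
      have hfz : fStar s (fun _ => false) t.val (some (s t)) = some (s ⟨t.val, ht⟩) := by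
        rw [fStar_false]
      have hfc : fStar s (fun _ => false) t.val (none : Option (Fin m)) = none := by
        rw [fStar_false]
      have hz : applySched ((modSched s (fun _ => false)).take (τ+1))
          (initP s (Sum.inl (some (s t)))) = some (Sum.inl t, 0) := by
        rw [applySched_take_succ s (fun _ => false) hτ',
          ih (by omega) (fun _ => false) (Sum.inl (some (s t)))]
        show (modRound s (fun _ => false) τ).foldl (fun v e => swapV e v)
          (itemPos s (fun _ => false) τ (some (s t))) = _
        rw [hρ, step_item s (fun _ => false) t.val 3 ht (by norm_num) (some (s t)),
          show (8*t.val+3+1 : ℕ) = 8*t.val+4 from by omega,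
          itemPos_z s (fun _ => false) ht (by norm_num) (by norm_num) hfz,
          show zPos s t.val 4 ht false = some (Sum.inl t, 0) from by norm_num [zPos]]
      have hc : applySched ((modSched s (fun _ => false)).take (τ+1))
          (initP s (Sum.inl (none : Option (Fin m)))) = some (Sum.inl t, 1) := by
        rw [applySched_take_succ s (fun _ => false) hτ',
          ih (by omega) (fun _ => false) (Sum.inl none)]
        show (modRound s (fun _ => false) τ).foldl (fun v e => swapV e v)
          (itemPos s (fun _ => false) τ none) = _
        rw [hρ, step_item s (fun _ => false) t.val 3 ht (by norm_num) none,
          show (8*t.val+3+1 : ℕ) = 8*t.val+4 from by omega,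
          itemPos_c s (fun _ => false) ht (by norm_num) (by norm_num) hfc,
          show cPos t.val 4 ht false = some (Sum.inl t, 1) from by norm_num [cPos]]
      rw [hy]
      constructor <;> intro hcon
      · have hiv := applySched_injective _ (hcon.trans hz.symm)
        exact v.2 (Or.inl ⟨some (s t), hiv.symm⟩)
      · have hiv := applySched_injective _ (hcon.trans hc.symm)
        exact v.2 (Or.inl ⟨none, hiv.symm⟩)

end Traj

/-!
STATEMENT 12: If the Star STS instance is a YES instance, then the constructed
parallel token swapping instance has a `K`-round solution, where `K = 8n`.
-/
theorem starSTS_yes_implies_parallel_solution {m n : ℕ}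
    (s : Fin n → Fin m) (π : Equiv.Perm (Option (Fin m)))
    (hyes : StarSTSYes π (List.ofFn s)) :
    ∃ sched : List (List (PV m n × PV m n)), IsSolution s π (8 * n) sched := by
  obtain ⟨σ', hsub, hπ⟩ := hyes
  obtain ⟨b, hb⟩ := exists_mask s σ' hsub
  refine ⟨modSched s b, le_of_eq (modSched_length s b), ?_, ?_⟩
  · intro R hR
    rw [modSched, List.mem_ofFn] at hR
    obtain ⟨τ, rfl⟩ := hR
    exact ⟨round_adj s b τ.val τ.isLt, round_pairwise s b τ.val⟩
  · intro tok
    have hfull : modSched s b = (modSched s b).take (8*n) := by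
      conv_lhs => rw [← List.take_length (l := modSched s b)]
      rw [modSched_length]
    rw [hfull, traj s (8*n) (le_refl _) b tok]
    match tok with
    | Sum.inl o =>
      show itemPos s b (8*n) o = tgtP s π (Sum.inl o)
      rw [itemPos_phase0]
      have hfn : fStar s b n o = π o := (hb o).symm.trans (congrFun hπ o)
      rw [phase0Pos, hfn]
      rcases hpo : π o with _ | i <;> simp only [tgtP, hpo]
    | Sum.inr (Sum.inl (t, r)) =>
      show posE (xB s t r) (yB s t r) (dOf t r) (8*n)
        = some (yB s t r, 8*n - dOf t r - 1)
      rw [posE_gt dOf_lt]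
    | Sum.inr (Sum.inr v) =>
      show applySched ((scaffold s).take (8*n)) v.val = applySched (scaffold s) v.val
      congr 1
      conv_rhs => rw [← List.take_length (l := scaffold s)]
      rw [scaffold_length]

end ParallelTS
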